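/- Let H₁, H₂, H₃ be positive functions and h₁, h₂, h₃ functions such that, setting Ĥᵢ := hᵢHᵢ, the relations H_i Ĥ_j - H_j Ĥ_i = ε_k H_k hold for all cyclic permutations (i,j,k) of (1,2,3), where (ε₁,ε₂,ε₃) = (1,1,-1). Then H₁² + H₂² - H₃² = 0, i.e. the system is a Guichard net. -/
import Mathlib

/-- if a Combescure transform satisfies H_iĤ_j - H_jĤ_i = ε_k H_k
for all cyclic (i,j,k), then the system is a Guichard net. -/
theorem stmt_11 (H₁ H₂ H₃ h₁ h₂ h₃ : EuclideanSpace ℝ (Fin 3) → ℝ)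
    (hpos : ∀ p, 0 < H₁ p ∧ 0 < H₂ p ∧ 0 < H₃ p)
    (r₁ : ∀ p, H₁ p * (h₂ p * H₂ p) - H₂ p * (h₁ p * H₁ p) = -(H₃ p))
    (r₂ : ∀ p, H₂ p * (h₃ p * H₃ p) - H₃ p * (h₂ p * H₂ p) = H₁ p)
    (r₃ : ∀ p, H₃ p * (h₁ p * H₁ p) - H₁ p * (h₃ p * H₃ p) = H₂ p) :
    ∀ p, H₁ p ^ 2 + H₂ p ^ 2 - H₃ p ^ 2 = 0 := by
  intro p
  linear_combination -(H₃ p * r₁ p + H₁ p * r₂ p + H₂ p * r₃ p)
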